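/- Let d ≥ 1, λ > 0, C_g > 0, t ≥ 1, and let g_0, …, g_{t-1} ∈ ℝ^d satisfy ‖g_i‖₂ ≤ C_g for all 0 ≤ i ≤ t-1. Define Σ_t = λI + Σ_{i=0}^{t-1} g_i g_iᵀ and Σ_0 = λI. Then log(det Σ_t / det Σ_0) ≤ d · log(1 + t·C_g² / (d·λ)). -/

import Mathlib

open Matrix Finset

lemma posSemidef_vecMulVec_self' {d : ℕ} (g : Fin d → ℝ) : (vecMulVec g g).PosSemidef := by
  simpa using posSemidef_vecMulVec_self_star g

lemma posDef_smul_one' {d : ℕ} {lam : ℝ} (h : 0 < lam) :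
    (lam • (1 : Matrix (Fin d) (Fin d) ℝ)).PosDef := by
  exact Matrix.PosDef.one.smul h

lemma trace_eq_sum_eigenvalues' {d : ℕ} (A : Matrix (Fin d) (Fin d) ℝ) (hA : A.IsHermitian) :
    A.trace = ∑ i, hA.eigenvalues i := by
  simpa using hA.trace_eq_sum_eigenvalues

lemma prod_le_amgm' {d : ℕ} (hd : 0 < d) (μ : Fin d → ℝ) (h : ∀ i, 0 ≤ μ i) :
    ∏ i, μ i ≤ ((∑ i, μ i) / d) ^ d := by
  have hd' : (0:ℝ) < d := by exact_mod_cast hd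
  have key := Real.geom_mean_le_arith_mean_weighted Finset.univ (fun _ => 1/(d:ℝ)) μ
    (fun i _ => by positivity) (by simp; field_simp) (fun i _ => h i)
  have h1 : ∏ i, μ i = (∏ i, μ i ^ ((1:ℝ)/d)) ^ d := by
    rw [← Finset.prod_pow]
    refine Finset.prod_congr rfl fun i _ => ?_
    rw [← Real.rpow_natCast (μ i ^ ((1:ℝ)/d)), ← Real.rpow_mul (h i)]
    field_simp
    simp
  rw [h1]
  have h2 : (∑ i, μ i) / d = ∑ i, (1/(d:ℝ)) * μ i := by
    rw [← Finset.mul_sum]; ring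
  rw [h2]
  exact pow_le_pow_left₀ (Finset.prod_nonneg fun i _ => Real.rpow_nonneg (h i) _) key d

/-- Log-determinant bound: if `‖g_i‖₂ ≤ C_g` for all `i < t`, then for
`Σ_t = λI + ∑_{i<t} g_i g_iᵀ` and `Σ_0 = λI`,
`log(det Σ_t / det Σ_0) ≤ d log(1 + t C_g²/(d λ))`. -/
theorem log_det_bound
    (d : ℕ) (hd : 1 ≤ d) (lam Cg : ℝ) (hlam : 0 < lam) (hCg : 0 < Cg)
    (t : ℕ) (ht : 1 ≤ t) (g : ℕ → Fin d → ℝ)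
    (hg : ∀ i < t, Real.sqrt (g i ⬝ᵥ g i) ≤ Cg)
    (St S0 : Matrix (Fin d) (Fin d) ℝ)
    (hSt : St = lam • (1 : Matrix (Fin d) (Fin d) ℝ) +
      ∑ i ∈ Finset.range t, vecMulVec (g i) (g i))
    (hS0 : S0 = lam • (1 : Matrix (Fin d) (Fin d) ℝ)) :
    Real.log (St.det / S0.det) ≤ d * Real.log (1 + t * Cg ^ 2 / (d * lam)) := by
  have hd' : (0:ℝ) < d := by exact_mod_cast hd
  -- positivity of St
  have hpsd : (∑ i ∈ Finset.range t, vecMulVec (g i) (g i)).PosSemidef := by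
    classical
    refine Finset.sum_induction _ _ (fun a b ha hb => ha.add hb) Matrix.PosSemidef.zero ?_
    intro i _; exact posSemidef_vecMulVec_self' (g i)
  have hpos : St.PosDef := by
    rw [hSt]; exact (posDef_smul_one' hlam).add_posSemidef hpsd
  have hH : St.IsHermitian := hpos.isHermitian
  set μ := hH.eigenvalues with hμ
  have hμpos : ∀ i, 0 < μ i := fun i => hpos.eigenvalues_pos i
  -- det and trace
  have hdet : St.det = ∏ i, μ i := by simpa using hH.det_eq_prod_eigenvalues
  have htr : St.trace = ∑ i, μ i := trace_eq_sum_eigenvalues' St hH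
  -- trace bound
  have hdot : ∀ i < t, g i ⬝ᵥ g i ≤ Cg ^ 2 := by
    intro i hi
    have h0 : 0 ≤ g i ⬝ᵥ g i := by
      simpa using dotProduct_star_self_nonneg (g i)
    have := hg i hi
    nlinarith [Real.sq_sqrt h0, Real.sqrt_nonneg (g i ⬝ᵥ g i)]
  have htrace_bound : St.trace ≤ d * lam + t * Cg ^ 2 := by
    rw [hSt, Matrix.trace_add, Matrix.trace_smul, Matrix.trace_one, Matrix.trace_sum]
    have h1 : ∀ i ∈ Finset.range t, (vecMulVec (g i) (g i)).trace ≤ Cg ^ 2 := by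
      intro i hi
      have : (vecMulVec (g i) (g i)).trace = g i ⬝ᵥ g i := by
        simp [Matrix.trace, Matrix.diag, vecMulVec_apply, dotProduct]
      rw [this]; exact hdot i (Finset.mem_range.mp hi)
    calc (lam • (Fintype.card (Fin d) : ℝ)) + ∑ i ∈ Finset.range t, (vecMulVec (g i) (g i)).trace
        ≤ lam * d + ∑ _i ∈ Finset.range t, Cg ^ 2 := by
          refine add_le_add (le_of_eq ?_) (Finset.sum_le_sum h1)
          simp [mul_comm]
      _ = d * lam + t * Cg ^ 2 := by
          rw [Finset.sum_const, Finset.card_range, nsmul_eq_mul]; ring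
  -- det bounds
  have hdet_le : St.det ≤ (St.trace / d) ^ d := by
    rw [hdet, htr]
    exact prod_le_amgm' hd μ (fun i => (hμpos i).le)
  have hdetS0 : S0.det = lam ^ d := by
    rw [hS0, Matrix.det_smul, Matrix.det_one]; simp
  have hdetSt_pos : 0 < St.det := hpos.det_pos
  -- main ratio bound
  have hb : (0:ℝ) < 1 + t * Cg ^ 2 / (d * lam) := by positivity
  have hratio : St.det / S0.det ≤ (1 + t * Cg ^ 2 / (d * lam)) ^ d := by
    rw [hdetS0]
    rw [div_le_iff₀ (by positivity)]
    calc St.det ≤ (St.trace / d) ^ d := hdet_le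
      _ ≤ ((d * lam + t * Cg ^ 2) / d) ^ d := by
          apply pow_le_pow_left₀
          · have h0 : 0 ≤ St.trace := by
              rw [htr]; exact Finset.sum_nonneg fun i _ => (hμpos i).le
            positivity
          · gcongr
      _ = (1 + t * Cg ^ 2 / (d * lam)) ^ d * lam ^ d := by
          rw [← mul_pow]
          congr 1
          field_simp
  calc Real.log (St.det / S0.det)
      ≤ Real.log ((1 + t * Cg ^ 2 / (d * lam)) ^ d) := by
        apply Real.log_le_log (by rw [hdetS0]; positivity) hratio
    _ = d * Real.log (1 + t * Cg ^ 2 / (d * lam)) := by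
        rw [Real.log_pow]
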